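/- Let R be an integral domain with fraction field K, and let σ be an R-algebra endomorphism of R[x,y]. Then σ is an automorphism of R[x,y] if and only if (i) the Jacobian determinant det(Jσ) evaluated at (0,0) is a unit of R, and (ii) the induced K-algebra endomorphism of K[x,y] is an automorphism. -/

import Mathlib

open MvPolynomial


namespace JacAux

variable {K : Type*} [CommRing K]

/-- monomial degree for `Fin 2` exponents -/
def mdeg (m : Fin 2 →₀ ℕ) : ℕ := m 0 + m 1

lemma mdeg_add (a b : Fin 2 →₀ ℕ) : mdeg (a + b) = mdeg a + mdeg b := by
  simp [mdeg, Finsupp.add_apply]; ring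

/-- p has all monomials of degree ≥ n -/
def D (n : ℕ) (p : MvPolynomial (Fin 2) K) : Prop :=
  ∀ m, coeff m p ≠ 0 → n ≤ mdeg m

lemma D_zero (n : ℕ) : D n (0 : MvPolynomial (Fin 2) K) := by
  intro m hm; simp at hm

lemma D_mono {n n' : ℕ} {p : MvPolynomial (Fin 2) K} (h : D n p) (hle : n' ≤ n) : D n' p :=
  fun m hm => hle.trans (h m hm)

lemma D_zero' (p : MvPolynomial (Fin 2) K) : D 0 p := fun _ _ => Nat.zero_le _

lemma D_add {n : ℕ} {p q : MvPolynomial (Fin 2) K} (hp : D n p) (hq : D n q) : D n (p + q) := by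
  intro m hm
  rw [coeff_add] at hm
  by_cases h : coeff m p = 0
  · exact hq m (by simpa [h] using hm)
  · exact hp m h

lemma D_mul {n k : ℕ} {p q : MvPolynomial (Fin 2) K} (hp : D n p) (hq : D k q) :
    D (n + k) (p * q) := by
  classical
  intro m hm
  rw [coeff_mul] at hm
  obtain ⟨x, hx, hne⟩ := Finset.exists_ne_zero_of_sum_ne_zero hm
  rw [Finset.HasAntidiagonal.mem_antidiagonal] at hx
  have h1 : coeff x.1 p ≠ 0 := fun h => hne (by simp [h])
  have h2 : coeff x.2 q ≠ 0 := fun h => hne (by simp [h])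
  have := add_le_add (hp _ h1) (hq _ h2)
  rwa [← mdeg_add, hx] at this

lemma D_sum {n : ℕ} {ι : Type*} {s : Finset ι} {f : ι → MvPolynomial (Fin 2) K}
    (h : ∀ i ∈ s, D n (f i)) : D n (∑ i ∈ s, f i) := by
  classical
  induction s using Finset.induction_on with
  | empty => simpa using D_zero n
  | insert a s hx ih =>
    rw [Finset.sum_insert hx]
    exact D_add (h a (Finset.mem_insert_self a s)) (ih fun i hi => h i (Finset.mem_insert_of_mem hi))

lemma D_monomial {n : ℕ} (m : Fin 2 →₀ ℕ) (c : K) (h : n ≤ mdeg m) :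
    D n (monomial m c) := by
  classical
  intro m' hm'
  rw [coeff_monomial] at hm'
  split at hm'
  · subst ‹m = m'›; exact h
  · exact absurd rfl hm'

lemma D_X (i : Fin 2) : D 1 (X i : MvPolynomial (Fin 2) K) := by
  have : (X i : MvPolynomial (Fin 2) K) = monomial (Finsupp.single i 1) 1 := by
    simp [X]
  rw [this]
  exact D_monomial _ _ (by fin_cases i <;> simp [mdeg])

lemma D_X_pow (i : Fin 2) (k : ℕ) : D k ((X i : MvPolynomial (Fin 2) K) ^ k) := by
  rw [X_pow_eq_monomial]
  exact D_monomial _ _ (by fin_cases i <;> simp [mdeg])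

lemma D_pow {n : ℕ} {p : MvPolynomial (Fin 2) K} (hp : D n p) (k : ℕ) : D (n * k) (p ^ k) := by
  induction k with
  | zero => simpa using D_zero' 1
  | succ k ih =>
    have := D_mul ih hp
    rw [pow_succ]
    have e : n * (k+1) = n * k + n := by ring
    rw [e]; exact this

lemma coeff_eq_zero_of_D {n : ℕ} {p : MvPolynomial (Fin 2) K} (hp : D n p)
    {m : Fin 2 →₀ ℕ} (h : mdeg m < n) : coeff m p = 0 := by
  by_contra hc
  exact absurd (hp m hc) (by omega)

end JacAux

namespace JacAux

variable {K : Type*} [CommRing K]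

/-- Polynomials all of whose coefficients lie in the subring `S`. -/
def coeffsIn (S : Subring K) : Subring (MvPolynomial (Fin 2) K) where
  carrier := {p | ∀ m, coeff m p ∈ S}
  zero_mem' := by intro m; rw [coeff_zero]; exact S.zero_mem
  one_mem' := by
    classical
    intro m; rw [coeff_one]; split
    · exact S.one_mem
    · exact S.zero_mem
  add_mem' := by
    intro p q hp hq m; rw [coeff_add]; exact S.add_mem (hp m) (hq m)
  neg_mem' := by
    intro p hp m; rw [coeff_neg]; exact S.neg_mem (hp m)
  mul_mem' := by
    classical
    intro p q hp hq m
    rw [coeff_mul]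
    exact S.sum_mem fun x _ => S.mul_mem (hp x.1) (hq x.2)

lemma mem_coeffsIn {S : Subring K} {p : MvPolynomial (Fin 2) K} :
    p ∈ coeffsIn S ↔ ∀ m, coeff m p ∈ S := Iff.rfl

lemma C_mem_coeffsIn {S : Subring K} {c : K} (hc : c ∈ S) : (C c : MvPolynomial (Fin 2) K) ∈ coeffsIn S := by
  classical
  intro m; rw [coeff_C]; split
  · exact hc
  · exact S.zero_mem

lemma monomial_mem_coeffsIn {S : Subring K} {c : K} (hc : c ∈ S) (m : Fin 2 →₀ ℕ) :
    (monomial m c : MvPolynomial (Fin 2) K) ∈ coeffsIn S := by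
  classical
  intro m'; rw [coeff_monomial]; split
  · exact hc
  · exact S.zero_mem

lemma X_mem_coeffsIn {S : Subring K} (i : Fin 2) : (X i : MvPolynomial (Fin 2) K) ∈ coeffsIn S := by
  have : (X i : MvPolynomial (Fin 2) K) = monomial (Finsupp.single i 1) 1 := by simp [X]
  rw [this]; exact monomial_mem_coeffsIn S.one_mem _

lemma finsupp_prod_pow (f : Fin 2 → MvPolynomial (Fin 2) K) (m : Fin 2 →₀ ℕ) :
    (m.prod fun i k => f i ^ k) = f 0 ^ m 0 * f 1 ^ m 1 := by
  rw [Finsupp.prod_fintype _ _ (fun i => pow_zero (f i))]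
  exact Fin.prod_univ_two _

lemma aeval_mem_coeffsIn {S : Subring K} {p : MvPolynomial (Fin 2) K}
    {u : Fin 2 → MvPolynomial (Fin 2) K} (hp : p ∈ coeffsIn S)
    (hu : ∀ i, u i ∈ coeffsIn S) : aeval u p ∈ coeffsIn S := by
  classical
  conv in aeval u p => rw [as_sum p]
  rw [map_sum]
  refine Subring.sum_mem _ fun m _ => ?_
  rw [aeval_monomial, finsupp_prod_pow]
  have : (algebraMap K (MvPolynomial (Fin 2) K)) (coeff m p) = C (coeff m p) := rfl
  rw [this]
  exact Subring.mul_mem _ (C_mem_coeffsIn (hp m))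
    (Subring.mul_mem _ (Subring.pow_mem _ (hu 0) _) (Subring.pow_mem _ (hu 1) _))

lemma D_aeval {n : ℕ} {p : MvPolynomial (Fin 2) K} {u : Fin 2 → MvPolynomial (Fin 2) K}
    (hp : D n p) (hu : ∀ i, D 1 (u i)) : D n (aeval u p) := by
  classical
  conv in aeval u p => rw [as_sum p]
  rw [map_sum]
  refine D_sum fun m hm => ?_
  rw [aeval_monomial, finsupp_prod_pow]
  have hmem : coeff m p ≠ 0 := by rwa [MvPolynomial.mem_support_iff] at hm
  have hn : n ≤ mdeg m := hp m hmem
  have h0 : D (m 0) (u 0 ^ m 0) := by simpa using D_pow (hu 0) (m 0)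
  have h1 : D (m 1) (u 1 ^ m 1) := by simpa using D_pow (hu 1) (m 1)
  have : D (0 + (m 0 + m 1)) ((algebraMap K (MvPolynomial (Fin 2) K)) (coeff m p) * (u 0 ^ m 0 * u 1 ^ m 1)) :=
    D_mul (D_zero' _) (D_mul h0 h1)
  exact D_mono (by simpa using this) (by simpa [mdeg] using hn)

lemma eq_of_mdeg_eq_zero {m : Fin 2 →₀ ℕ} (h : mdeg m = 0) : m = 0 := by
  unfold mdeg at h
  ext i
  fin_cases i <;> simp <;> omega

end JacAux

namespace JacAux

variable {K : Type*} [CommRing K]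

lemma eq_single_of_mdeg_eq_one {m : Fin 2 →₀ ℕ} (h : mdeg m = 1) :
    m = Finsupp.single 0 1 ∨ m = Finsupp.single 1 1 := by
  unfold mdeg at h
  rcases Nat.eq_zero_or_pos (m 0) with h0 | h0
  · right; ext i; fin_cases i <;> simp <;> omega
  · left; ext i; fin_cases i <;> simp <;> omega

/-- If every monomial of degree ≤ 1 has zero coefficient, then `D 2 p`. -/
lemma D_two_of_coeffs {p : MvPolynomial (Fin 2) K} (h0 : coeff 0 p = 0)
    (h1 : ∀ j, coeff (Finsupp.single j 1) p = 0) : D 2 p := by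
  intro m hm
  by_contra hlt
  push_neg at hlt
  interval_cases hd : mdeg m
  · exact hm (by rw [eq_of_mdeg_eq_zero hd]; exact h0)
  · rcases eq_single_of_mdeg_eq_one hd with h | h <;> exact hm (by rw [h]; apply h1)

/-- Expansion of a power of `X i + h` with `D 2 h`. -/
lemma pow_expand (i : Fin 2) (h : MvPolynomial (Fin 2) K) (hD : D 2 h) (k : ℕ) :
    ∃ r, (X i + h) ^ k = X i ^ k + r ∧ D (k + 1) r := by
  induction k with
  | zero =>
    refine ⟨0, by simp, ?_⟩
    intro m hm; simp at hm
  | succ k ih =>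
    obtain ⟨r, hr, hDr⟩ := ih
    refine ⟨X i ^ k * h + r * X i + r * h, ?_, ?_⟩
    · rw [pow_succ, hr]; ring
    · refine D_add (D_add ?_ ?_) ?_
      · exact D_mono (D_mul (D_X_pow i k) hD) (by omega)
      · exact D_mono (D_mul hDr (D_X i)) (by omega)
      · exact D_mono (D_mul hDr hD) (by omega)

lemma single_add_single (m : Fin 2 →₀ ℕ) :
    Finsupp.single (0 : Fin 2) (m 0) + Finsupp.single (1 : Fin 2) (m 1) = m := by
  ext i; fin_cases i <;> simp

/-- Expansion of a monomial in `f i = X i + h i`. -/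
lemma monomial_expand (h : Fin 2 → MvPolynomial (Fin 2) K) (hD : ∀ i, D 2 (h i))
    (m' : Fin 2 →₀ ℕ) :
    ∃ r, (X 0 + h 0) ^ m' 0 * (X 1 + h 1) ^ m' 1 = monomial m' 1 + r ∧ D (mdeg m' + 1) r := by
  obtain ⟨r0, hr0, hD0⟩ := pow_expand 0 (h 0) (hD 0) (m' 0)
  obtain ⟨r1, hr1, hD1⟩ := pow_expand 1 (h 1) (hD 1) (m' 1)
  have hmono : (X 0 : MvPolynomial (Fin 2) K) ^ m' 0 * X 1 ^ m' 1 = monomial m' 1 := by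
    rw [X_pow_eq_monomial, X_pow_eq_monomial, monomial_mul, one_mul, single_add_single]
  refine ⟨X 0 ^ m' 0 * r1 + r0 * X 1 ^ m' 1 + r0 * r1, ?_, ?_⟩
  · rw [hr0, hr1, ← hmono]; ring
  · refine D_add (D_add ?_ ?_) ?_
    · exact D_mono (D_mul (D_X_pow 0 (m' 0)) hD1) (by unfold mdeg; omega)
    · exact D_mono (D_mul hD0 (D_X_pow 1 (m' 1))) (by unfold mdeg; omega)
    · exact D_mono (D_mul hD0 hD1) (by unfold mdeg; omega)

end JacAux

namespace JacAux

variable {K : Type*} [CommRing K]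

/-- Core lemma: if `f i = X i + hᵢ` with `hᵢ` of order ≥ 2 and coefficients in `S`,
and `aeval f g` has coefficients in `S`, then `g` has coefficients in `S`. -/
lemma core (S : Subring K) (h : Fin 2 → MvPolynomial (Fin 2) K) (hD : ∀ i, D 2 (h i))
    (hfS : ∀ i, (X i + h i : MvPolynomial (Fin 2) K) ∈ coeffsIn S)
    (g : MvPolynomial (Fin 2) K)
    (hg : aeval (fun i => X i + h i) g ∈ coeffsIn S) : g ∈ coeffsIn S := by
  classical
  set f : Fin 2 → MvPolynomial (Fin 2) K := fun i => X i + h i with hf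
  set F : (Fin 2 →₀ ℕ) → MvPolynomial (Fin 2) K := fun m' => f 0 ^ m' 0 * f 1 ^ m' 1 with hF
  have hFS : ∀ m', F m' ∈ coeffsIn S := fun m' =>
    Subring.mul_mem _ (Subring.pow_mem _ (hfS 0) _) (Subring.pow_mem _ (hfS 1) _)
  have expand : ∀ m, coeff m (aeval f g) = ∑ m' ∈ g.support, coeff m' g * coeff m (F m') := by
    intro m
    conv_lhs => rw [as_sum g, map_sum]
    rw [coeff_sum]
    refine Finset.sum_congr rfl fun m' _ => ?_
    rw [aeval_monomial, finsupp_prod_pow]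
    have : (algebraMap K (MvPolynomial (Fin 2) K)) (coeff m' g) = C (coeff m' g) := rfl
    rw [this, coeff_C_mul]
  suffices H : ∀ d m, mdeg m = d → coeff m g ∈ S by exact fun m => H _ m rfl
  intro d
  induction d using Nat.strong_induction_on with
  | _ d IH =>
    intro m hmd
    by_cases hmem : m ∈ g.support
    case neg =>
      rw [MvPolynomial.notMem_support_iff] at hmem
      rw [hmem]; exact S.zero_mem
    case pos =>
      have hterms : ∀ m' ∈ g.support.erase m, coeff m' g * coeff m (F m') ∈ S := by
        intro m' hm'
        have hne : m' ≠ m := Finset.ne_of_mem_erase hm'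
        obtain ⟨r, hrEq, hrD⟩ := monomial_expand h hD m'
        have hFm' : F m' = monomial m' 1 + r := hrEq
        rcases lt_trichotomy (mdeg m') d with hlt | heq | hgt
        · exact S.mul_mem (IH _ hlt m' rfl) (hFS m' m)
        · have h1 : coeff m (monomial m' (1 : K)) = 0 := by
            rw [coeff_monomial, if_neg hne]
          have h2 : coeff m r = 0 := coeff_eq_zero_of_D hrD (by omega)
          rw [hFm', coeff_add, h1, h2]
          simp [S.zero_mem]
        · have h1 : coeff m (monomial m' (1 : K)) = 0 := by
            rw [coeff_monomial, if_neg hne]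
          have h2 : coeff m r = 0 := coeff_eq_zero_of_D hrD (by omega)
          rw [hFm', coeff_add, h1, h2]
          simp [S.zero_mem]
      have hdiag : coeff m (F m) = 1 := by
        obtain ⟨r, hrEq, hrD⟩ := monomial_expand h hD m
        have h2 : coeff m r = 0 := coeff_eq_zero_of_D hrD (by omega)
        rw [show F m = monomial m 1 + r from hrEq, coeff_add, coeff_monomial, if_pos rfl, h2,
          add_zero]
      have hsum := expand m
      rw [← Finset.add_sum_erase _ _ hmem, hdiag, mul_one] at hsum
      have : coeff m g = coeff m (aeval f g) - ∑ m' ∈ g.support.erase m, coeff m' g * coeff m (F m') := by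
        rw [hsum]; ring
      rw [this]
      exact S.sub_mem (hg m) (S.sum_mem hterms)

end JacAux

namespace JacAux

variable {K : Type*} [CommRing K]

lemma reduced (S : Subring K) (f g : Fin 2 → MvPolynomial (Fin 2) K)
    (hfS : ∀ i, f i ∈ coeffsIn S)
    (hrel : ∀ j, aeval f (g j) = X j)
    (Mm N : Fin 2 → Fin 2 → K)
    (hM : ∀ i j, coeff (Finsupp.single j 1) (f i) = Mm i j)
    (hNS : ∀ i j, N i j ∈ S)
    (hMN : ∀ i l, Mm i 0 * N 0 l + Mm i 1 * N 1 l = if i = l then 1 else 0)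
    (hNM : ∀ i l, N i 0 * Mm 0 l + N i 1 * Mm 1 l = if i = l then 1 else 0) :
    ∀ j, g j ∈ coeffsIn S := by
  classical
  have hMS : ∀ i j, Mm i j ∈ S := fun i j => hM i j ▸ hfS i _
  -- translation
  set a : Fin 2 → K := fun i => coeff 0 (f i) with ha
  have haS : ∀ i, a i ∈ S := fun i => hfS i 0
  set u : Fin 2 → MvPolynomial (Fin 2) K := fun k => X k + C (a k) with hu
  set v : Fin 2 → MvPolynomial (Fin 2) K := fun k => X k - C (a k) with hv
  set f' : Fin 2 → MvPolynomial (Fin 2) K := fun i => f i - C (a i) with hf'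
  set g' : Fin 2 → MvPolynomial (Fin 2) K := fun j => aeval u (g j) with hg'
  have hf'S : ∀ i, f' i ∈ coeffsIn S :=
    fun i => Subring.sub_mem _ (hfS i) (C_mem_coeffsIn (haS i))
  have hf'0 : ∀ i, coeff 0 (f' i) = 0 := by
    intro i; simp [hf', ha, coeff_C]
  have hf'1 : ∀ i j, coeff (Finsupp.single j 1) (f' i) = Mm i j := by
    intro i j
    have : (Finsupp.single j 1 : Fin 2 →₀ ℕ) ≠ 0 := by simp
    simp [hf', coeff_C, Ne.symm this, hM i j]
  have hrel' : ∀ j, aeval f' (g' j) = X j := by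
    intro j
    have hcomp : (aeval f').comp (aeval u) = (aeval f : MvPolynomial (Fin 2) K →ₐ[K] _) := by
      rw [comp_aeval]
      congr 1
      funext k
      simp [hu, hf', algebraMap_eq]
    calc aeval f' (g' j) = ((aeval f').comp (aeval u)) (g j) := rfl
      _ = aeval f (g j) := by rw [hcomp]
      _ = X j := hrel j
  -- linear part normalization
  set L : Fin 2 → MvPolynomial (Fin 2) K := fun k => C (N k 0) * X 0 + C (N k 1) * X 1 with hL
  have hLS : ∀ k, L k ∈ coeffsIn S := fun k =>
    Subring.add_mem _ (Subring.mul_mem _ (C_mem_coeffsIn (hNS k 0)) (X_mem_coeffsIn 0))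
      (Subring.mul_mem _ (C_mem_coeffsIn (hNS k 1)) (X_mem_coeffsIn 1))
  have hLD : ∀ k, D 1 (L k) := by
    intro k
    refine D_add ?_ ?_
    · exact D_mono (D_mul (D_zero' (C (N k 0))) (D_X 0)) (by omega)
    · exact D_mono (D_mul (D_zero' (C (N k 1))) (D_X 1)) (by omega)
  set f'' : Fin 2 → MvPolynomial (Fin 2) K := fun i => aeval L (f' i) with hf''
  have hf''S : ∀ i, f'' i ∈ coeffsIn S := fun i => aeval_mem_coeffsIn (hf'S i) hLS
  have hcomp2 : (aeval L).comp (aeval f') = (aeval f'' : MvPolynomial (Fin 2) K →ₐ[K] _) := by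
    rw [comp_aeval]
  have hf''g' : ∀ k, aeval f'' (g' k) = L k := by
    intro k
    calc aeval f'' (g' k) = ((aeval L).comp (aeval f')) (g' k) := by rw [hcomp2]
      _ = aeval L (X k) := by rw [AlgHom.coe_comp, Function.comp_apply, hrel' k]
      _ = L k := aeval_X _ _
  set g'' : Fin 2 → MvPolynomial (Fin 2) K :=
    fun j => C (Mm j 0) * g' 0 + C (Mm j 1) * g' 1 with hg''
  have hrel'' : ∀ j, aeval f'' (g'' j) = X j := by
    intro j
    have e0 := hMN j 0
    have e1 := hMN j 1
    calc aeval f'' (g'' j) = C (Mm j 0) * L 0 + C (Mm j 1) * L 1 := by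
          simp only [hg'', map_add, map_mul, aeval_C, algebraMap_eq, hf''g' 0, hf''g' 1]
      _ = C (Mm j 0 * N 0 0 + Mm j 1 * N 1 0) * X 0
          + C (Mm j 0 * N 0 1 + Mm j 1 * N 1 1) * X 1 := by
          simp only [hL, C_add, C_mul]; ring
      _ = X j := by
          rw [e0, e1]; fin_cases j <;> simp
  -- decompose f'
  set h : Fin 2 → MvPolynomial (Fin 2) K :=
    fun i => f' i - (C (Mm i 0) * X 0 + C (Mm i 1) * X 1) with hh
  have hhD : ∀ i, D 2 (h i) := by
    intro i
    refine D_two_of_coeffs ?_ ?_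
    · simp [hh, hf'0 i, coeff_C_mul, coeff_X']
    · intro j
      have hsne : ∀ l : Fin 2, ((Finsupp.single l 1 : Fin 2 →₀ ℕ) = Finsupp.single j 1) ↔ l = j := by
        intro l
        constructor
        · intro hl
          by_contra hne
          have := Finsupp.single_eq_single_iff l j 1 1 |>.mp hl
          simp [hne] at this
        · intro hl; rw [hl]
      simp only [hh, coeff_sub, coeff_add, coeff_C_mul, coeff_X', hf'1 i j]
      rw [if_congr (hsne 0) rfl rfl, if_congr (hsne 1) rfl rfl]
      fin_cases j <;> simp
  have hfdec : ∀ i, f' i = C (Mm i 0) * X 0 + C (Mm i 1) * X 1 + h i := by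
    intro i; simp [hh]
  -- f'' = X i + (order ≥ 2)
  set h'' : Fin 2 → MvPolynomial (Fin 2) K := fun i => aeval L (h i) with hh''
  have hh''D : ∀ i, D 2 (h'' i) := fun i => D_aeval (hhD i) hLD
  have hf''dec : ∀ i, f'' i = X i + h'' i := by
    intro i
    have e0 := hMN i 0
    have e1 := hMN i 1
    calc f'' i = aeval L (C (Mm i 0) * X 0 + C (Mm i 1) * X 1 + h i) := by rw [hf'', ← hfdec i]
      _ = C (Mm i 0) * L 0 + C (Mm i 1) * L 1 + h'' i := by
          simp only [map_add, map_mul, aeval_C, algebraMap_eq, aeval_X, hh'']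
      _ = C (Mm i 0 * N 0 0 + Mm i 1 * N 1 0) * X 0
          + C (Mm i 0 * N 0 1 + Mm i 1 * N 1 1) * X 1 + h'' i := by
          simp only [hL, C_add, C_mul]; ring
      _ = X i + h'' i := by rw [e0, e1]; fin_cases i <;> simp
  -- apply the core lemma to g''
  have hg''S : ∀ j, g'' j ∈ coeffsIn S := by
    intro j
    refine core S h'' hh''D (fun i => ?_) (g'' j) ?_
    · rw [← hf''dec i]; exact hf''S i
    · have : (fun i => X i + h'' i) = f'' := by funext i; rw [← hf''dec i]
      rw [this, hrel'' j]
      exact X_mem_coeffsIn j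
  -- recover g'
  have hg'S : ∀ l, g' l ∈ coeffsIn S := by
    intro l
    have e0 := hNM l 0
    have e1 := hNM l 1
    have : g' l = C (N l 0) * g'' 0 + C (N l 1) * g'' 1 := by
      simp only [hg'']
      have : C (N l 0) * (C (Mm 0 0) * g' 0 + C (Mm 0 1) * g' 1)
          + C (N l 1) * (C (Mm 1 0) * g' 0 + C (Mm 1 1) * g' 1)
          = C (N l 0 * Mm 0 0 + N l 1 * Mm 1 0) * g' 0
            + C (N l 0 * Mm 0 1 + N l 1 * Mm 1 1) * g' 1 := by
        simp only [C_add, C_mul]; ring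
      rw [this, e0, e1]
      fin_cases l <;> simp
    rw [this]
    exact Subring.add_mem _
      (Subring.mul_mem _ (C_mem_coeffsIn (hNS l 0)) (hg''S 0))
      (Subring.mul_mem _ (C_mem_coeffsIn (hNS l 1)) (hg''S 1))
  -- recover g
  intro j
  have : g j = aeval v (g' j) := by
    have hcomp3 : (aeval v).comp (aeval u) = (aeval X : MvPolynomial (Fin 2) K →ₐ[K] _) := by
      rw [comp_aeval]
      congr 1
      funext k
      simp [hu, hv, algebraMap_eq]
    calc g j = aeval X (g j) := by rw [aeval_X_left]; rfl
      _ = ((aeval v).comp (aeval u)) (g j) := by rw [hcomp3]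
      _ = aeval v (g' j) := rfl
  rw [this]
  refine aeval_mem_coeffsIn (hg'S j) (fun k => ?_)
  exact Subring.sub_mem _ (X_mem_coeffsIn k) (C_mem_coeffsIn (haS k))

end JacAux

namespace JacAux

variable {R : Type*} [CommRing R]

lemma coeff_zero_pderiv (j : Fin 2) (p : MvPolynomial (Fin 2) R) :
    coeff 0 (pderiv j p) = coeff (Finsupp.single j 1) p := by
  classical
  induction p using MvPolynomial.induction_on' with
  | add p q hp hq => simp only [map_add, coeff_add, hp, hq]
  | monomial u a =>
    rw [pderiv_monomial, coeff_monomial, coeff_monomial]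
    by_cases hu : u = Finsupp.single j 1
    · subst hu
      simp
    · rw [if_neg hu]
      by_cases huj : u j = 0
      · split
        · simp [huj]
        · rfl
      · have hne : u - Finsupp.single j 1 ≠ 0 := by
          intro h0
          apply hu
          ext i
          have hi : u i - (Finsupp.single j 1) i = 0 := by
            rw [← Finsupp.tsub_apply, h0]; rfl
          by_cases hij : i = j
          · subst hij
            rw [Finsupp.single_eq_same] at hi ⊢
            omega
          · rw [Finsupp.single_eq_of_ne hij] at hi ⊢
            omega
        rw [if_neg fun h => hne h]

lemma eval_zero_pderiv (j : Fin 2) (p : MvPolynomial (Fin 2) R) :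
    eval (fun _ => (0 : R)) (pderiv j p) = coeff (Finsupp.single j 1) p := by
  rw [eval_zero', constantCoeff_eq]
  exact coeff_zero_pderiv j p

/-- Chain rule for `pderiv` and `aeval`, two variables. -/
lemma pderiv_aeval (F : Fin 2 → MvPolynomial (Fin 2) R) (j : Fin 2)
    (p : MvPolynomial (Fin 2) R) :
    pderiv j (aeval F p) =
      aeval F (pderiv 0 p) * pderiv j (F 0) + aeval F (pderiv 1 p) * pderiv j (F 1) := by
  classical
  induction p using MvPolynomial.induction_on with
  | C a => simp
  | add p q hp hq => simp only [map_add, hp, hq]; ring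
  | mul_X p i hp =>
    rw [map_mul, aeval_X, pderiv_mul, hp]
    simp only [pderiv_mul, map_add, map_mul, aeval_X]
    fin_cases i <;> simp <;> ring

end JacAux

namespace JacAux

variable {R : Type*} [CommRing R] {K : Type*} [CommRing K] [Algebra R K]

/-- Commutation of the induced endomorphism with the coefficient extension. -/
lemma comm_map (σ : MvPolynomial (Fin 2) R →ₐ[R] MvPolynomial (Fin 2) R)
    (p : MvPolynomial (Fin 2) R) :
    aeval (fun i => MvPolynomial.map (algebraMap R K) (σ (X i))) (MvPolynomial.map (algebraMap R K) p)
      = MvPolynomial.map (algebraMap R K) (σ p) := by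
  set φ := algebraMap R K
  set τ := (aeval (fun i => MvPolynomial.map φ (σ (X i))) :
    MvPolynomial (Fin 2) K →ₐ[K] MvPolynomial (Fin 2) K)
  have : (τ.toRingHom.comp (MvPolynomial.map φ) : MvPolynomial (Fin 2) R →+* MvPolynomial (Fin 2) K)
      = (MvPolynomial.map φ).comp σ.toRingHom := by
    apply MvPolynomial.ringHom_ext
    · intro r
      simp only [RingHom.coe_comp, Function.comp_apply, AlgHom.toRingHom_eq_coe,
        RingHom.coe_coe, map_C]
      have hσC : σ (C r) = C r := by
        have : (C r : MvPolynomial (Fin 2) R) = algebraMap R _ r := rfl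
        rw [this, AlgHom.commutes]
      rw [show (τ : MvPolynomial (Fin 2) K → _) (C (φ r)) = C (φ r) by
        have : (C (φ r) : MvPolynomial (Fin 2) K) = algebraMap K _ (φ r) := rfl
        rw [this, AlgHom.commutes], hσC, map_C]
    · intro i
      simp only [RingHom.coe_comp, Function.comp_apply, AlgHom.toRingHom_eq_coe,
        RingHom.coe_coe, map_X]
      exact aeval_X _ i
  exact DFunLike.congr_fun this p

end JacAux

namespace JacAux

variable {R : Type*} [CommRing R]

/-- Forward direction, Jacobian part. -/
lemma jac_unit_of_bijective (σ : MvPolynomial (Fin 2) R →ₐ[R] MvPolynomial (Fin 2) R)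
    (hbij : Function.Bijective σ) :
    IsUnit (eval (fun _ => (0 : R))
      (pderiv 0 (σ (X 0)) * pderiv 1 (σ (X 1)) -
        pderiv 0 (σ (X 1)) * pderiv 1 (σ (X 0)))) := by
  classical
  set E := AlgEquiv.ofBijective σ hbij with hE
  set F : Fin 2 → MvPolynomial (Fin 2) R := fun i => σ (X i) with hF
  set F' : Fin 2 → MvPolynomial (Fin 2) R := fun i => E.symm (X i) with hF'
  have hσ_eq : ∀ p, σ p = aeval F p := by
    intro p
    have := MvPolynomial.aeval_unique σ
    rw [this]; rfl
  have hFF' : ∀ i, aeval F (F' i) = X i := by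
    intro i
    rw [← hσ_eq]
    exact E.apply_symm_apply (X i)
  set A : Fin 2 → Fin 2 → MvPolynomial (Fin 2) R :=
    fun i k => aeval F (pderiv k (F' i)) with hA
  set B : Fin 2 → Fin 2 → MvPolynomial (Fin 2) R := fun k j => pderiv j (F k) with hB
  have e : ∀ i j, A i 0 * B 0 j + A i 1 * B 1 j = if i = j then 1 else 0 := by
    intro i j
    have := pderiv_aeval F j (F' i)
    rw [hFF' i] at this
    rw [← this]
    by_cases hij : i = j
    · subst hij; rw [pderiv_X_self, if_pos rfl]
    · rw [pderiv_X_of_ne hij, if_neg hij]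
  have hdet : (A 0 0 * A 1 1 - A 0 1 * A 1 0) * (B 0 0 * B 1 1 - B 0 1 * B 1 0) = 1 := by
    have hid : (A 0 0 * A 1 1 - A 0 1 * A 1 0) * (B 0 0 * B 1 1 - B 0 1 * B 1 0)
        = (A 0 0 * B 0 0 + A 0 1 * B 1 0) * (A 1 0 * B 0 1 + A 1 1 * B 1 1)
          - (A 0 0 * B 0 1 + A 0 1 * B 1 1) * (A 1 0 * B 0 0 + A 1 1 * B 1 0) := by ring
    rw [hid, e 0 0, e 0 1, e 1 0, e 1 1]
    simp
  have := congrArg (eval (fun _ => (0 : R))) hdet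
  rw [map_mul, map_one] at this
  have hgoal : (pderiv 0 (σ (X 0)) * pderiv 1 (σ (X 1)) -
      pderiv 0 (σ (X 1)) * pderiv 1 (σ (X 0)))
      = B 0 0 * B 1 1 - B 0 1 * B 1 0 := by
    simp only [hB, hF]; ring
  rw [hgoal]
  exact IsUnit.of_mul_eq_one _ (by rw [mul_comm] at this; exact this)

end JacAux

namespace JacAux

variable {R : Type*} [CommRing R] {K : Type*} [CommRing K]

lemma exists_of_coeffsIn_range (φ : R →+* K) (p : MvPolynomial (Fin 2) K)
    (h : p ∈ coeffsIn φ.range) : ∃ q, MvPolynomial.map φ q = p := by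
  classical
  choose c hc using fun m => h m
  refine ⟨∑ m ∈ p.support, monomial m (c m), ?_⟩
  rw [map_sum]
  conv_rhs => rw [as_sum p]
  refine Finset.sum_congr rfl fun m _ => ?_
  rw [map_monomial, hc m]

end JacAux


/-- An `R`-algebra endomorphism `σ` of `R[x,y]` (over a domain `R` with fraction field
`K`) is an automorphism iff its Jacobian determinant at the origin is a unit of `R` and
the induced endomorphism of `K[x,y]` is an automorphism. -/
theorem automorphism_iff_jacobian_and_fraction_field (R : Type*) [CommRing R] [IsDomain R]
    (σ : MvPolynomial (Fin 2) R →ₐ[R] MvPolynomial (Fin 2) R) :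
    Function.Bijective σ ↔
      (IsUnit (eval (fun _ => (0 : R))
          (pderiv 0 (σ (X 0)) * pderiv 1 (σ (X 1)) -
            pderiv 0 (σ (X 1)) * pderiv 1 (σ (X 0)))) ∧
        Function.Bijective
          (aeval (R := FractionRing R)
            (fun i => MvPolynomial.map (algebraMap R (FractionRing R)) (σ (X i)))
            : MvPolynomial (Fin 2) (FractionRing R) →ₐ[FractionRing R]
              MvPolynomial (Fin 2) (FractionRing R))) := by
  classical
  set K := FractionRing R with hK
  set φ := algebraMap R K with hφ
  set τ := (aeval (R := K) (fun i => MvPolynomial.map φ (σ (X i))) :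
    MvPolynomial (Fin 2) K →ₐ[K] MvPolynomial (Fin 2) K) with hτdef
  have φinj : Function.Injective φ := IsFractionRing.injective R K
  have mapinj : Function.Injective
      (MvPolynomial.map φ : MvPolynomial (Fin 2) R → MvPolynomial (Fin 2) K) :=
    MvPolynomial.map_injective φ φinj
  constructor
  · intro hbij
    refine ⟨JacAux.jac_unit_of_bijective σ hbij, ?_⟩
    set E := AlgEquiv.ofBijective σ hbij with hE
    set σ' : MvPolynomial (Fin 2) R →ₐ[R] MvPolynomial (Fin 2) R := ↑E.symm with hσ'
    set τ' := (aeval (R := K) (fun i => MvPolynomial.map φ (σ' (X i))) :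
      MvPolynomial (Fin 2) K →ₐ[K] MvPolynomial (Fin 2) K) with hτ'def
    have hσσ' : ∀ p, σ (σ' p) = p := fun p => E.apply_symm_apply p
    have hσ'σ : ∀ p, σ' (σ p) = p := fun p => E.symm_apply_apply p
    have hcomp1 : ∀ p, τ (τ' p) = p := by
      have : τ.comp τ' = AlgHom.id K _ := by
        apply MvPolynomial.algHom_ext
        intro i
        simp only [AlgHom.coe_comp, Function.comp_apply, AlgHom.id_apply]
        rw [hτ'def]
        rw [aeval_X]
        rw [JacAux.comm_map σ (σ' (X i)), hσσ' (X i), map_X]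
      intro p
      exact DFunLike.congr_fun this p
    have hcomp2 : ∀ p, τ' (τ p) = p := by
      have : τ'.comp τ = AlgHom.id K _ := by
        apply MvPolynomial.algHom_ext
        intro i
        simp only [AlgHom.coe_comp, Function.comp_apply, AlgHom.id_apply]
        rw [hτdef]
        rw [aeval_X]
        rw [JacAux.comm_map σ' (σ (X i)), hσ'σ (X i), map_X]
      intro p
      exact DFunLike.congr_fun this p
    exact Function.bijective_iff_has_inverse.mpr ⟨τ', hcomp2, hcomp1⟩
  · rintro ⟨hJ, hτ⟩
    have hinj : Function.Injective σ := by
      intro p q hpq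
      apply mapinj
      apply hτ.injective
      rw [show (τ (MvPolynomial.map φ p)) = MvPolynomial.map φ (σ p) from JacAux.comm_map σ p,
        show (τ (MvPolynomial.map φ q)) = MvPolynomial.map φ (σ q) from JacAux.comm_map σ q, hpq]
    refine ⟨hinj, ?_⟩
    -- surjectivity
    set EK := AlgEquiv.ofBijective τ hτ with hEK
    set g : Fin 2 → MvPolynomial (Fin 2) K := fun j => EK.symm (X j) with hg
    set S : Subring K := φ.range with hS
    set f : Fin 2 → MvPolynomial (Fin 2) K := fun i => MvPolynomial.map φ (σ (X i)) with hf
    set M' : Fin 2 → Fin 2 → R := fun i j => eval (fun _ => (0 : R)) (pderiv j (σ (X i))) with hM'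
    set Mat : Matrix (Fin 2) (Fin 2) R := Matrix.of fun i j => M' i j with hMat
    have hdet : IsUnit Mat.det := by
      rw [Matrix.det_fin_two]
      rw [map_sub, map_mul, map_mul] at hJ
      have : Mat 0 0 * Mat 1 1 - Mat 0 1 * Mat 1 0
          = eval (fun _ => (0 : R)) (pderiv 0 (σ (X 0))) * eval (fun _ => (0 : R)) (pderiv 1 (σ (X 1)))
            - eval (fun _ => (0 : R)) (pderiv 0 (σ (X 1))) * eval (fun _ => (0 : R)) (pderiv 1 (σ (X 0))) := by
        simp only [hMat, Matrix.of_apply, hM']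
        ring
      rw [this]
      exact hJ
    haveI : Invertible Mat := Mat.invertibleOfIsUnitDet hdet
    set Nm : Matrix (Fin 2) (Fin 2) R := ⅟Mat with hNm
    have hMN' : ∀ i l, M' i 0 * Nm 0 l + M' i 1 * Nm 1 l = if i = l then 1 else 0 := by
      intro i l
      have h := mul_invOf_self Mat
      have h2 := congrFun (congrFun h i) l
      rw [Matrix.mul_apply, Fin.sum_univ_two] at h2
      rw [show ((1 : Matrix (Fin 2) (Fin 2) R) i l) = if i = l then 1 else 0 from Matrix.one_apply] at h2
      exact h2
    have hNM' : ∀ i l, Nm i 0 * M' 0 l + Nm i 1 * M' 1 l = if i = l then 1 else 0 := by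
      intro i l
      have h := invOf_mul_self Mat
      have h2 := congrFun (congrFun h i) l
      rw [Matrix.mul_apply, Fin.sum_univ_two] at h2
      rw [show ((1 : Matrix (Fin 2) (Fin 2) R) i l) = if i = l then 1 else 0 from Matrix.one_apply] at h2
      exact h2
    have hgS : ∀ j, g j ∈ JacAux.coeffsIn S := by
      refine JacAux.reduced S f g ?_ ?_ (fun i j => φ (M' i j)) (fun i j => φ (Nm i j)) ?_ ?_ ?_ ?_
      · intro i m
        rw [hf, coeff_map]
        exact ⟨_, rfl⟩
      · intro j
        exact EK.apply_symm_apply (X j)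
      · intro i j
        rw [hf, coeff_map, ← JacAux.eval_zero_pderiv j (σ (X i))]
      · intro i j
        exact ⟨_, rfl⟩
      · intro i l
        rw [← map_mul, ← map_mul, ← map_add, hMN' i l]
        rw [apply_ite φ, map_one, map_zero]
      · intro i l
        rw [← map_mul, ← map_mul, ← map_add, hNM' i l]
        rw [apply_ite φ, map_one, map_zero]
    intro p
    have hqmem : EK.symm (MvPolynomial.map φ p) ∈ JacAux.coeffsIn S := by
      have huniq : (EK.symm : MvPolynomial (Fin 2) K →ₐ[K] MvPolynomial (Fin 2) K)
          = aeval g := by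
        rw [MvPolynomial.aeval_unique ((EK.symm : MvPolynomial (Fin 2) K ≃ₐ[K] _) :
          MvPolynomial (Fin 2) K →ₐ[K] MvPolynomial (Fin 2) K)]
        rfl
      have : EK.symm (MvPolynomial.map φ p) = aeval g (MvPolynomial.map φ p) :=
        DFunLike.congr_fun huniq (MvPolynomial.map φ p)
      rw [this]
      refine JacAux.aeval_mem_coeffsIn ?_ hgS
      intro m
      rw [coeff_map]
      exact ⟨_, rfl⟩
    obtain ⟨q', hq'⟩ := JacAux.exists_of_coeffsIn_range φ _ hqmem
    refine ⟨q', ?_⟩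
    apply mapinj
    rw [← JacAux.comm_map σ q', hq']
    exact EK.apply_symm_apply _
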